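/- Assume K is algebraically closed. Then E⁺ is a valuation ring: it is an integral domain and for any two elements x, y ∈ E⁺, either x divides y or y divides x. (E⁺ is the valuation ring for the valuation v_E(x) = lim_{n→∞} v(x_n)^{p^n}.) -/

import Mathlib

open scoped NNReal

open Perfection

/-- Key auxiliary lemma: in `PreTilt`, if `val g ≤ val f` then `f ∣ g`. -/
theorem preTilt_dvd_of_val_le
    (p : ℕ) [hp : Fact p.Prime]
    (K : Type*) [Field K] (v : Valuation K ℝ≥0)
    (O : Type*) [CommRing O] [Algebra O K] (hv : v.Integers O)
    [hv1 : Fact (v p ≠ 1)] [Fact ¬IsUnit (p : O)] (f g : PreTilt O p)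
    (hle : PreTilt.val K v O hv p g ≤ PreTilt.val K v O hv p f) : f ∣ g := by
  classical
  set φ := algebraMap O K with hφ
  by_cases hg0 : g = 0
  · exact hg0 ▸ dvd_zero f
  by_cases hf0 : f = 0
  · exfalso
    apply hg0
    rw [← PreTilt.map_eq_zero hv]
    refine le_antisymm ?_ (zero_le)
    simpa [hf0, (PreTilt.map_eq_zero hv).2 rfl] using hle
  -- basic setup
  have hppos : 0 < p := hp.out.pos
  have hppow : ∀ m : ℕ, (p ^ m : ℕ) ≠ 0 := fun m => (pow_pos hppos m).ne'
  set s : ℝ≥0 := NNReal.sqrt (v p) with hs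
  have hs_sq : s * s = v p := NNReal.mul_self_sqrt _
  have hvp1 : v p ≤ 1 := by
    have h := hv.map_le_one (p : O)
    rwa [map_natCast] at h
  have hs1 : s ≤ 1 := NNReal.sqrt_le_one.2 hvp1
  have hs_lt1 : s < 1 := by
    refine lt_of_le_of_ne hs1 fun h => hv1.out ?_
    rw [← hs_sq, h, one_mul]
  obtain ⟨nf, hnf⟩ : ∃ n, Perfection.coeff (ModP O p) p n f ≠ 0 :=
    not_forall.1 fun h => hf0 (Perfection.ext h)
  obtain ⟨ng, hng⟩ : ∃ n, Perfection.coeff (ModP O p) p n g ≠ 0 :=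
    not_forall.1 fun h => hg0 (Perfection.ext h)
  set V : ℝ≥0 := PreTilt.val K v O hv p f with hV
  have hV0 : 0 < V := zero_lt_iff.2 fun h => hf0 ((PreTilt.map_eq_zero hv).1 h)
  obtain ⟨N₀, hN₀⟩ : ∃ n : ℕ, s ^ n < V * V := by
    obtain ⟨n, hn⟩ := exists_pow_lt_of_lt_one (x := ((V : ℝ) * V)) (y := (s : ℝ))
      (by positivity) (by exact_mod_cast hs_lt1)
    exact ⟨n, by exact_mod_cast hn⟩
  set N₁ : ℕ := max N₀ (max nf ng) with hN₁
  have hfm : ∀ m, N₁ ≤ m → Perfection.coeff (ModP O p) p m f ≠ 0 := fun m hm =>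
    Perfection.coeff_ne_zero_of_le hnf
      (le_trans (le_trans (le_max_left nf ng) (le_max_right N₀ _)) hm)
  have hgm : ∀ m, N₁ ≤ m → Perfection.coeff (ModP O p) p m g ≠ 0 := fun m hm =>
    Perfection.coeff_ne_zero_of_le hng
      (le_trans (le_trans (le_max_right nf ng) (le_max_right N₀ _)) hm)
  -- choose lifts of the coefficients of f and g
  choose a ha using fun n => Ideal.Quotient.mk_surjective
    (I := Ideal.span {(p : O)}) (Perfection.coeff (ModP O p) p n f)
  choose b hb using fun n => Ideal.Quotient.mk_surjective
    (I := Ideal.span {(p : O)}) (Perfection.coeff (ModP O p) p n g)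
  -- valuation of the lifts
  have hαf : ∀ m, N₁ ≤ m → v (φ (a m)) ^ p ^ m = V := by
    intro m hm
    have h1 : (Ideal.Quotient.mk (Ideal.span {(p : O)}) (a m) : ModP O p) ≠ 0 :=
      (ha m).symm ▸ hfm m hm
    calc v (φ (a m)) ^ p ^ m
        = ModP.preVal K v O p (Perfection.coeff (ModP O p) p m f) ^ p ^ m := by
          rw [← ha m, ModP.preVal_mk hv h1]
      _ = V := (PreTilt.valAux_eq hv (hfm m hm)).symm
  have hβg : ∀ m, N₁ ≤ m → v (φ (b m)) ^ p ^ m = PreTilt.val K v O hv p g := by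
    intro m hm
    have h1 : (Ideal.Quotient.mk (Ideal.span {(p : O)}) (b m) : ModP O p) ≠ 0 :=
      (hb m).symm ▸ hgm m hm
    calc v (φ (b m)) ^ p ^ m
        = ModP.preVal K v O p (Perfection.coeff (ModP O p) p m g) ^ p ^ m := by
          rw [← hb m, ModP.preVal_mk hv h1]
      _ = _ := (PreTilt.valAux_eq hv (hgm m hm)).symm
  have hA0 : ∀ m, N₁ ≤ m → v (φ (a m)) ≠ 0 := by
    intro m hm h
    rw [← pow_eq_zero_iff (hppow m)] at h
    exact hV0.ne' (h ▸ (hαf m hm).symm)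
  have hba : ∀ m, N₁ ≤ m → v (φ (b m)) ≤ v (φ (a m)) := by
    intro m hm
    have : v (φ (b m)) ^ p ^ m ≤ v (φ (a m)) ^ p ^ m := by
      rw [hαf m hm, hβg m hm]; exact hle
    exact (pow_le_pow_iff_left₀ (zero_le) (zero_le) (hppow m)).1 this
  -- divide b by a
  have hdvd : ∀ n : ℕ, ∃ t : O, b (N₁ + n) = a (N₁ + n) * t := fun n =>
    hv.dvd_of_le (hba _ (Nat.le_add_right _ _))
  choose t ht using hdvd
  -- the p-power compatibility of the coefficients, at the level of the lifts
  have hu' : ∀ m : ℕ, ∃ u : O, a (m + 1) ^ p - a m = (p : O) * u := by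
    intro m
    have h0 : (Ideal.Quotient.mk (Ideal.span {(p : O)}) (a (m + 1) ^ p - a m)
        : ModP O p) = 0 := by
      rw [map_sub, map_pow, ha, ha]
      exact sub_eq_zero.2 (Perfection.coeff_pow_p' f m)
    obtain ⟨u, hu⟩ := Ideal.mem_span_singleton.1 (Ideal.Quotient.eq_zero_iff_mem.1 h0)
    exact ⟨u, hu⟩
  have hw' : ∀ m : ℕ, ∃ w : O, b (m + 1) ^ p - b m = (p : O) * w := by
    intro m
    have h0 : (Ideal.Quotient.mk (Ideal.span {(p : O)}) (b (m + 1) ^ p - b m)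
        : ModP O p) = 0 := by
      rw [map_sub, map_pow, hb, hb]
      exact sub_eq_zero.2 (Perfection.coeff_pow_p' g m)
    obtain ⟨w, hw⟩ := Ideal.mem_span_singleton.1 (Ideal.Quotient.eq_zero_iff_mem.1 h0)
    exact ⟨w, hw⟩
  choose uu huu using hu'
  choose ww hww using hw'
  -- the key estimate
  have hts : ∀ n : ℕ, v (φ (t (n + 1) ^ p - t n)) ≤ s := by
    intro n
    set m : ℕ := N₁ + n with hm
    have hmN : N₁ ≤ m := Nat.le_add_right _ _
    have hm1N : N₁ ≤ m + 1 := hmN.trans (Nat.le_succ _)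
    have e2 : b m = a m * t n := ht n
    have e1 : b (m + 1) = a (m + 1) * t (n + 1) := ht (n + 1)
    have e3 := huu m
    have e4 := hww m
    have e4' : a (m + 1) ^ p * t (n + 1) ^ p - a m * t n = (p : O) * ww m := by
      rw [← mul_pow, ← e1, ← e2]; exact e4
    have key : a m * a (m + 1) ^ p * (t (n + 1) ^ p - t n)
        = (p : O) * (a m * ww m - uu m * b m) := by
      linear_combination (a m) * e4' + (-(a m * t n)) * e3 + ((p : O) * uu m) * e2
    -- from β^p = α
    have hβα : v (φ (a (m + 1))) ^ p = v (φ (a m)) := by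
      have h1 : (v (φ (a (m + 1))) ^ p) ^ p ^ m = v (φ (a m)) ^ p ^ m := by
        rw [← pow_mul, ← pow_succ', hαf (m + 1) hm1N, hαf m hmN]
      exact le_antisymm
        ((pow_le_pow_iff_left₀ (zero_le) (zero_le) (hppow m)).1 h1.le)
        ((pow_le_pow_iff_left₀ (zero_le) (zero_le) (hppow m)).1 h1.ge)
    -- s ≤ α * α
    have hα2 : s ≤ v (φ (a m)) * v (φ (a m)) := by
      by_contra hc
      push_neg at hc
      have h1 : (v (φ (a m)) * v (φ (a m))) ^ p ^ m < s ^ p ^ m :=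
        pow_lt_pow_left₀ hc (zero_le) (hppow m)
      rw [mul_pow, hαf m hmN] at h1
      have h2 : s ^ p ^ m ≤ s ^ N₀ := by
        refine pow_le_pow_of_le_one (zero_le) hs1 ?_
        calc N₀ ≤ N₁ := le_max_left _ _
          _ ≤ m := hmN
          _ ≤ p ^ m := (Nat.lt_pow_self hp.out.one_lt : m < p ^ m).le
      exact absurd ((h1.trans_le h2).trans hN₀) (lt_irrefl _)
    -- apply the valuation to `key`
    have hkey : v (φ (a m)) * v (φ (a m)) * v (φ (t (n + 1) ^ p - t n)) ≤ s * s := by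
      have h1 := congrArg (fun z => v (φ z)) key
      simp only [map_mul, map_pow, map_natCast] at h1
      rw [hβα] at h1
      calc v (φ (a m)) * v (φ (a m)) * v (φ (t (n + 1) ^ p - t n))
          = v ↑p * v (φ (a m * ww m - uu m * b m)) := h1
        _ ≤ v ↑p * 1 := mul_le_mul_right (hv.map_le_one _) _
        _ = s * s := by rw [mul_one, hs_sq]
    rcases eq_or_ne s 0 with hs0 | hs0
    · have h0 : v (φ (a m)) * v (φ (a m)) * v (φ (t (n + 1) ^ p - t n)) = 0 :=
        le_antisymm (by simpa [hs0] using hkey) (zero_le)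
      rcases mul_eq_zero.1 h0 with h | h
      · rcases mul_eq_zero.1 h with h' | h' <;> exact absurd h' (hA0 m hmN)
      · rw [h]; exact zero_le
    · by_contra hlt
      push_neg at hlt
      have h1 : s * s < v (φ (a m)) * v (φ (a m)) * v (φ (t (n + 1) ^ p - t n)) := by
        calc s * s < s * v (φ (t (n + 1) ^ p - t n)) :=
              mul_lt_mul_of_pos_left hlt (zero_lt_iff.2 hs0)
          _ ≤ v (φ (a m)) * v (φ (a m)) * v (φ (t (n + 1) ^ p - t n)) :=
              mul_le_mul_left hα2 _
      exact absurd (h1.trans_le hkey) (lt_irrefl _)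
  -- congruence mod p of p-th powers
  have hmodp : ∀ x y : O, v (φ (x - y)) ≤ s →
      (Ideal.Quotient.mk (Ideal.span {(p : O)}) (x ^ p) : ModP O p)
        = Ideal.Quotient.mk (Ideal.span {(p : O)}) (y ^ p) := by
    intro x y hxy
    obtain ⟨r, hr⟩ := exists_add_pow_prime_eq hp.out (x - y) y
    rw [sub_add_cancel] at hr
    have hdvd1 : (p : O) ∣ (x - y) ^ p := by
      refine hv.dvd_of_le ?_
      rw [map_pow, map_natCast, map_pow]
      calc v (φ (x - y)) ^ p ≤ s ^ p := pow_le_pow_left₀ (zero_le) hxy p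
        _ ≤ s ^ 2 := pow_le_pow_of_le_one (zero_le) hs1 hp.out.two_le
        _ = v ↑p := by rw [sq, hs_sq]
    obtain ⟨z, hz⟩ := hdvd1
    rw [Ideal.Quotient.eq]
    have hxy' : x ^ p - y ^ p = (p : O) * (z + (x - y) * y * r) := by
      rw [hr, hz]; ring
    rw [hxy']
    exact Ideal.mem_span_singleton.2 ⟨z + (x - y) * y * r, rfl⟩
  -- build the quotient element h
  set c : ℕ → ModP O p :=
    fun n => Ideal.Quotient.mk (Ideal.span {(p : O)}) (t (n + 1) ^ p) with hc
  have hcc : ∀ n, c (n + 1) ^ p = c n := by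
    intro n
    show (Ideal.Quotient.mk (Ideal.span {(p : O)}) (t (n + 2) ^ p)) ^ p = _
    rw [← map_pow]
    exact hmodp (t (n + 2) ^ p) (t (n + 1)) (hts (n + 1))
  refine ⟨⟨fun n => c n ^ p ^ N₁, fun n => ?_⟩, ?_⟩
  · rw [← pow_mul, mul_comm, pow_mul, hcc n]
  -- check g = f * h
  have hshift : ∀ (x : PreTilt O p) (n k : ℕ),
      Perfection.coeff (ModP O p) p n x
        = Perfection.coeff (ModP O p) p (n + k) x ^ p ^ k := by
    intro x n k
    induction k with
    | zero => simp
    | succ k ih =>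
      rw [ih, show Perfection.coeff (ModP O p) p (n + k) x
          = Perfection.coeff (ModP O p) p (n + k + 1) x ^ p from
          (Perfection.coeff_pow_p' x (n + k)).symm, ← pow_mul, ← pow_succ']
      rfl
  apply Perfection.ext
  intro n
  refine Eq.trans ?_ (map_mul (Perfection.coeff (ModP O p) p n) f _).symm
  have hcoeffh : Perfection.coeff (ModP O p) p n
      (⟨fun n => c n ^ p ^ N₁, fun n => by rw [← pow_mul, mul_comm, pow_mul, hcc n]⟩
        : PreTilt O p) = c n ^ p ^ N₁ := rfl
  erw [hcoeffh]
  have hcn : c n ^ p ^ N₁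
      = (Ideal.Quotient.mk (Ideal.span {(p : O)}) (t (n + 1)) : ModP O p)
        ^ p ^ (N₁ + 1) := by
    rw [hc]
    simp only [map_pow]
    rw [← pow_mul, ← pow_succ']
  erw [hcn]
  have e : n + (N₁ + 1) = N₁ + (n + 1) := by omega
  erw [hshift f n (N₁ + 1), hshift g n (N₁ + 1), ← mul_pow, e, ← ha, ← hb,
    ht (n + 1), map_mul]

/-- If `K` is algebraically closed, then `E⁺` is a valuation ring: it is an integral domain
and for any `x, y ∈ E⁺`, either `x ∣ y` or `y ∣ x`. -/
theorem preTilt_isDomain_and_dvd_total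
    (p : ℕ) [Fact p.Prime]
    (K : Type*) [Field K] [IsAlgClosed K] (v : Valuation K ℝ≥0)
    (O : Type*) [CommRing O] [Algebra O K] (hv : v.Integers O)
    [Fact (v p ≠ 1)] :
    haveI : Fact ¬IsUnit (p : O) :=
      Fact.mk <| mt hv.one_of_isUnit <| (map_natCast (algebraMap O K) p).symm ▸ (Fact.out : v p ≠ 1)
    IsDomain (PreTilt O p) ∧
      ∀ x y : PreTilt O p, x ∣ y ∨ y ∣ x := by
  haveI : Fact ¬IsUnit (p : O) :=
    Fact.mk <| mt hv.one_of_isUnit <| (map_natCast (algebraMap O K) p).symm ▸ (Fact.out : v p ≠ 1)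
  refine ⟨PreTilt.isDomain K v O hv p, fun x y => ?_⟩
  rcases le_total (PreTilt.val K v O hv p y) (PreTilt.val K v O hv p x) with h | h
  · exact Or.inl (preTilt_dvd_of_val_le p K v O hv x y h)
  · exact Or.inr (preTilt_dvd_of_val_le p K v O hv y x h)
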